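/- For every m ∈ ℕ with m ∉ {4, 16}, letting p be the unique integer with C(p−1,2) < m ≤ C(p,2), there exists an equivalence relation ∼ on {0,1,...,p−1} such that: (1) the number of pairs (x,y) with x < y and x ≁ y is exactly m; (2) {0} is a singleton equivalence class; (3) no equivalence class has more than ⌈p/2⌉ elements. -/

import Mathlib

open Finset

private def fml (a t p i : ℕ) : ℕ :=
  if i = 0 then 0 else if i ≤ a then 1 else if i ≤ a + 2*t then 2 + (i - a - 1)/2 else p + i

private lemma choose_succ_two (n : ℕ) : (n+1).choose 2 = n.choose 2 + n := by
  simp [Nat.choose_succ_succ, Nat.choose_one_right, Nat.add_comm]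

private lemma two_dvd_mul_pred (n : ℕ) : 2 ∣ n * (n - 1) := by
  rcases Nat.even_or_odd n with h | h
  · exact Dvd.dvd.mul_right h.two_dvd _
  · cases n with
    | zero => simp
    | succ k =>
      have : Even k := by
        rcases h with ⟨j, hj⟩; exact ⟨j, by omega⟩
      simpa using Dvd.dvd.mul_left this.two_dvd _

private lemma two_mul_choose_two (n : ℕ) : 2 * n.choose 2 = n * (n - 1) := by
  rw [Nat.choose_two_right, Nat.mul_div_cancel' (two_dvd_mul_pred n)]

private lemma tri_card (n : ℕ) :
    ((range n ×ˢ range n).filter fun q => q.1 < q.2).card = n.choose 2 := by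
  induction n with
  | zero => simp
  | succ k ih =>
    have hsplit : ((range (k+1) ×ˢ range (k+1)).filter fun q => q.1 < q.2)
        = ((range k ×ˢ range k).filter fun q => q.1 < q.2)
          ∪ (range k).image (fun x => (x, k)) := by
      ext ⟨x, y⟩
      simp only [mem_filter, mem_product, mem_range, mem_union, mem_image, Prod.mk.injEq]
      constructor
      · rintro ⟨⟨hx, hy⟩, hxy⟩
        by_cases hyk : y = k
        · right; exact ⟨x, by omega, by omega, by omega⟩
        · left; omega
      · rintro (⟨⟨hx, hy⟩, hxy⟩ | ⟨i, hi, hx, hy⟩) <;> omega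
    have hdisj : Disjoint ((range k ×ˢ range k).filter fun q => q.1 < q.2)
        ((range k).image (fun x => (x, k))) := by
      rw [disjoint_left]
      rintro ⟨x, y⟩ h1 h2
      simp only [mem_filter, mem_product, mem_range] at h1
      simp only [mem_image, mem_range, Prod.mk.injEq] at h2
      obtain ⟨i, hi, hx, hy⟩ := h2
      omega
    have hinj : Function.Injective (fun x : ℕ => (x, k)) := by
      intro i j h; simpa using h
    rw [hsplit, card_union_of_disjoint hdisj, ih, card_image_of_injective _ hinj, card_range,
      choose_succ_two]

private lemma transfer1 (p : ℕ) (P : ℕ → Prop) [DecidablePred P] :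
    ((univ : Finset (Fin p)).filter fun y => P y.val).card = ((range p).filter P).card := by
  have himg : ((range p).filter P)
      = ((univ : Finset (Fin p)).filter fun y => P y.val).image Fin.val := by
    ext x
    simp only [mem_filter, mem_range, mem_image, mem_univ, true_and]
    constructor
    · rintro ⟨hx, hP⟩; exact ⟨⟨x, hx⟩, hP, rfl⟩
    · rintro ⟨y, hP, rfl⟩; exact ⟨y.isLt, hP⟩
  rw [himg, card_image_of_injective _ Fin.val_injective]

private lemma transfer2 (p : ℕ) (P : ℕ → ℕ → Prop) [∀ x y, Decidable (P x y)] :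
    ((univ : Finset (Fin p × Fin p)).filter fun q => P q.1.val q.2.val).card
      = ((range p ×ˢ range p).filter fun q => P q.1 q.2).card := by
  have hinj : Function.Injective (fun q : Fin p × Fin p => (q.1.val, q.2.val)) := by
    rintro ⟨a, b⟩ ⟨c, d⟩ h
    simp only [Prod.mk.injEq] at h
    exact Prod.ext (Fin.ext h.1) (Fin.ext h.2)
  have himg : ((range p ×ˢ range p).filter fun q => P q.1 q.2)
      = ((univ : Finset (Fin p × Fin p)).filter fun q => P q.1.val q.2.val).image
          (fun q => (q.1.val, q.2.val)) := by
    ext ⟨x, y⟩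
    simp only [mem_filter, mem_product, mem_range, mem_image, mem_univ, true_and, Prod.exists,
      Prod.mk.injEq]
    constructor
    · rintro ⟨⟨hx, hy⟩, hP⟩; exact ⟨⟨x, hx⟩, ⟨y, hy⟩, hP, rfl, rfl⟩
    · rintro ⟨u, v, hP, rfl, rfl⟩; exact ⟨⟨u.isLt, v.isLt⟩, hP⟩
  rw [himg, card_image_of_injective _ hinj]

private lemma eq_pairs_card (a t p : ℕ) (ha : 1 ≤ a) (_hat : a + 2*t < p) :
    ((range p ×ˢ range p).filter fun q => q.1 < q.2 ∧ fml a t p q.1 = fml a t p q.2).card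
      = a.choose 2 + t := by
  have hsplit : ((range p ×ˢ range p).filter fun q => q.1 < q.2 ∧ fml a t p q.1 = fml a t p q.2)
      = (((range a ×ˢ range a).filter fun q => q.1 < q.2).image fun q => (q.1 + 1, q.2 + 1))
        ∪ (range t).image (fun i => (a + 2*i + 1, a + 2*i + 2)) := by
    ext ⟨x, y⟩
    simp only [mem_filter, mem_product, mem_range, mem_union, mem_image, Prod.mk.injEq,
      Prod.exists]
    simp only [fml]
    constructor
    · rintro ⟨⟨hx, hy⟩, hxy, hf⟩
      split_ifs at hf <;> try omega
      · left; exact ⟨x - 1, y - 1, ⟨⟨by omega, by omega⟩, by omega⟩, by omega, by omega⟩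
      · right; exact ⟨(x - a - 1)/2, by omega, by omega, by omega⟩
    · rintro (⟨u, v, ⟨⟨hu, hv⟩, huv⟩, hx, hy⟩ | ⟨i, hi, hx, hy⟩) <;>
      · refine ⟨⟨by omega, by omega⟩, by omega, ?_⟩
        split_ifs <;> omega
  have hdisj : Disjoint
      (((range a ×ˢ range a).filter fun q => q.1 < q.2).image fun q => (q.1 + 1, q.2 + 1))
      ((range t).image (fun i => (a + 2*i + 1, a + 2*i + 2))) := by
    rw [disjoint_left]
    rintro ⟨x, y⟩ h1 h2
    simp only [mem_image, mem_filter, mem_product, mem_range, Prod.mk.injEq, Prod.exists] at h1 h2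
    obtain ⟨u, v, ⟨⟨hu, hv⟩, huv⟩, hx, hy⟩ := h1
    obtain ⟨i, hi, hx', hy'⟩ := h2
    omega
  have hinj1 : Function.Injective (fun q : ℕ × ℕ => (q.1 + 1, q.2 + 1)) := by
    rintro ⟨u, v⟩ ⟨u', v'⟩ h
    simp only [Prod.mk.injEq] at h ⊢
    omega
  have hinj2 : Function.Injective (fun i : ℕ => (a + 2*i + 1, a + 2*i + 2)) := by
    intro i j h
    simp only [Prod.mk.injEq] at h
    omega
  rw [hsplit, card_union_of_disjoint hdisj, card_image_of_injective _ hinj1,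
    card_image_of_injective _ hinj2, card_range, tri_card]

private lemma class_bound (a t p x : ℕ) (ha : 1 ≤ a) (_hat : a + 2*t < p) (hx : x < p)
    (h2a : 2*a ≤ p + 1) (h3 : 1 ≤ t → 3 ≤ p) :
    ((range p).filter fun y => fml a t p x = fml a t p y).card ≤ (p + 1) / 2 := by
  rcases Nat.lt_or_ge x 1 with hx0 | hx1
  · -- x = 0
    have hsub : ((range p).filter fun y => fml a t p x = fml a t p y) ⊆ {0} := by
      intro y hy
      simp only [mem_filter, mem_range] at hy
      simp only [fml] at hy
      obtain ⟨hyp, heq⟩ := hy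
      simp only [mem_singleton]
      split_ifs at heq <;> omega
    calc _ ≤ ({0} : Finset ℕ).card := card_le_card hsub
      _ ≤ (p+1)/2 := by simp only [card_singleton]; omega
  · rcases Nat.lt_or_ge a x with hxa | hxa
    · rcases Nat.lt_or_ge (a + 2*t) x with hxt | hxt
      · -- singleton zone
        have hsub : ((range p).filter fun y => fml a t p x = fml a t p y) ⊆ {x} := by
          intro y hy
          simp only [mem_filter, mem_range] at hy
          simp only [fml] at hy
          obtain ⟨hyp, heq⟩ := hy
          simp only [mem_singleton]
          split_ifs at heq <;> omega
        calc _ ≤ ({x} : Finset ℕ).card := card_le_card hsub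
          _ ≤ (p+1)/2 := by simp only [card_singleton]; omega
      · -- pair zone
        have ht1 : 1 ≤ t := by omega
        have hsub : ((range p).filter fun y => fml a t p x = fml a t p y)
            ⊆ {a + 2*((x - a - 1)/2) + 1, a + 2*((x - a - 1)/2) + 2} := by
          intro y hy
          simp only [mem_filter, mem_range] at hy
          simp only [fml] at hy
          obtain ⟨hyp, heq⟩ := hy
          simp only [mem_insert, mem_singleton]
          split_ifs at heq <;> omega
        calc _ ≤ ({a + 2*((x - a - 1)/2) + 1, a + 2*((x - a - 1)/2) + 2} : Finset ℕ).card :=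
              card_le_card hsub
          _ ≤ 2 := (card_insert_le _ _).trans (by simp)
          _ ≤ (p+1)/2 := by have := h3 ht1; omega
    · -- block
      have hsub : ((range p).filter fun y => fml a t p x = fml a t p y) ⊆ Icc 1 a := by
        intro y hy
        simp only [mem_filter, mem_range] at hy
        simp only [fml] at hy
        obtain ⟨hyp, heq⟩ := hy
        simp only [mem_Icc]
        split_ifs at heq <;> omega
      calc _ ≤ (Icc 1 a).card := card_le_card hsub
        _ = a := by rw [Nat.card_Icc]; omega
        _ ≤ (p+1)/2 := by omega

/-- For m ∉ {4,16} (m ≥ 1), with p the integer satisfying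
C(p−1,2) < m ≤ C(p,2), there is an equivalence relation on {0,…,p−1} with exactly m
non-equivalent pairs x < y, with 0 in a singleton class, and no class of more than
⌈p/2⌉ elements. -/
theorem stmt13 (m p : ℕ) (hm : 1 ≤ m) (hm4 : m ≠ 4) (hm16 : m ≠ 16)
    (hp1 : Nat.choose (p - 1) 2 < m) (hp2 : m ≤ Nat.choose p 2) :
    ∃ s : Setoid (Fin p),
      Nat.card {q : Fin p × Fin p // q.1 < q.2 ∧ ¬ s.r q.1 q.2} = m ∧
      (∀ x y : Fin p, (x : ℕ) = 0 → (s.r x y ↔ x = y)) ∧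
      (∀ x : Fin p, Nat.card {y : Fin p // s.r x y} ≤ (p + 1) / 2) := by
  -- basic facts about p
  have hp2' : 2 ≤ p := by
    by_contra h
    interval_cases p <;> simp_all
  obtain ⟨d, hmd⟩ : ∃ d, m + d = p.choose 2 := ⟨p.choose 2 - m, by omega⟩
  -- d ≤ p - 2
  have hchoose : p.choose 2 = (p - 1).choose 2 + (p - 1) := by
    obtain ⟨k, rfl⟩ : ∃ k, p = k + 1 := ⟨p - 1, by omega⟩
    rw [choose_succ_two]
    simp
  have hdp : d + 2 ≤ p := by omega
  -- define a and t
  obtain ⟨a, hadef⟩ : ∃ a, a = Nat.findGreatest (fun k => k.choose 2 ≤ d) (d + 1) := ⟨_, rfl⟩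
  have ha1 : 1 ≤ a := hadef ▸ Nat.le_findGreatest (by omega) (by simp)
  have hca : a.choose 2 ≤ d := by
    rw [hadef]
    exact Nat.findGreatest_spec (P := fun k => k.choose 2 ≤ d) (by omega : 1 ≤ d + 1) (by simp)
  have hale : a ≤ d + 1 := hadef ▸ Nat.findGreatest_le _
  have hd_lt : d < (a + 1).choose 2 := by
    rcases Nat.lt_or_ge a (d + 1) with h | h
    · have := Nat.findGreatest_is_greatest (P := fun k => k.choose 2 ≤ d)
        (k := a + 1) (hadef ▸ lt_add_one a) (by omega : a + 1 ≤ d + 1)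
      omega
    · -- a = d + 1, so (d+1).choose 2 ≤ d forces d ≤ 1
      have hae : a = d + 1 := by omega
      have h2c : 2 * a.choose 2 = a * (a - 1) := two_mul_choose_two a
      have hprod : (d + 1) * d ≤ 2 * d := by
        have h2c' : 2 * a.choose 2 = (d + 1) * d := by rw [h2c, hae]; simp
        omega
      have hd1 : d ≤ 1 := by nlinarith [hprod]
      rcases (by omega : d = 0 ∨ d = 1) with h0 | h0 <;> rw [hae, h0] <;> decide
  obtain ⟨t, htdef⟩ : ∃ t, t = d - a.choose 2 := ⟨_, rfl⟩
  have hsucc : (a + 1).choose 2 = a.choose 2 + a := by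
    rw [choose_succ_two]
  have hct : a.choose 2 + t = d := by omega
  have hta : t < a := by omega
  -- key size bound
  have hsize : a + 2*t < p := by
    by_contra h
    push_neg at h
    have h2c : 2 * a.choose 2 = a * (a - 1) := two_mul_choose_two a
    have hc2 : a + t ≥ a.choose 2 + 2 := by omega
    have ha3 : a ≤ 3 := by
      by_contra hgt
      push_neg at hgt
      obtain ⟨b, hab⟩ : ∃ b, a = b + 1 := ⟨a - 1, by omega⟩
      subst hab
      have hb : 3 ≤ b := by omega
      have h2c'' : 2 * ((b+1).choose 2) = b*b + b := by
        have := two_mul_choose_two (b+1)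
        simp only [Nat.add_sub_cancel] at this
        rw [this]; ring
      have hbb : 3*b ≤ b*b := Nat.mul_le_mul_right b hb
      linarith [h2c'', hc2, hta, hbb]
    interval_cases a
    · -- a = 1
      simp at h2c
      omega
    · -- a = 2 : C(2,2) = 1
      have hc : Nat.choose 2 2 = 1 := by decide
      have hc3 : Nat.choose 3 2 = 3 := by decide
      rw [hc] at hca hct
      rw [hc3] at hd_lt
      have hp4 : p = 4 := by omega
      rw [hp4] at hmd
      have : Nat.choose 4 2 = 6 := by decide
      omega
    · -- a = 3 : C(3,2) = 3
      have hc : Nat.choose 3 2 = 3 := by decide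
      have hc4 : Nat.choose 4 2 = 6 := by decide
      rw [hc] at hca hct
      rw [hc4] at hd_lt
      have hp7 : p = 7 := by omega
      rw [hp7] at hmd
      have : Nat.choose 7 2 = 21 := by decide
      omega
  have h2a : 2*a ≤ p + 1 := by
    rcases Nat.lt_or_ge a 3 with h | h
    · have hc : Nat.choose 2 2 = 1 := by decide
      interval_cases a <;> omega
    · by_contra hcon
      push_neg at hcon
      obtain ⟨b, hab⟩ : ∃ b, a = b + 1 := ⟨a - 1, by omega⟩
      subst hab
      have hb : 2 ≤ b := by omega
      have h2c'' : 2 * ((b+1).choose 2) = b*b + b := by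
        have := two_mul_choose_two (b+1)
        simp only [Nat.add_sub_cancel] at this
        rw [this]; ring
      have hbb : 2*b ≤ b*b := Nat.mul_le_mul_right b hb
      have key : b*b + b + 4 ≤ 4*b := by linarith [h2c'', hca, hdp, hcon]
      have hb4 : 4 ≤ b := by linarith [hbb, key]
      have hbb4 : 4*b ≤ b*b := Nat.mul_le_mul_right b hb4
      linarith [key, hbb4]
  have h3 : 1 ≤ t → 3 ≤ p := fun ht => by omega
  -- build the setoid
  refine ⟨⟨fun x y => fml a t p x.val = fml a t p y.val,
    ⟨fun _ => rfl, fun h => h.symm, fun h1 h2 => h1.trans h2⟩⟩, ?_, ?_, ?_⟩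
  · -- count
    show Nat.card {q : Fin p × Fin p //
      q.1 < q.2 ∧ ¬ fml a t p q.1.val = fml a t p q.2.val} = m
    have htotal : ((univ : Finset (Fin p × Fin p)).filter fun q => q.1.val < q.2.val).card
        = p.choose 2 := by
      rw [transfer2 p (fun x y => x < y), tri_card]
    have heq : ((univ : Finset (Fin p × Fin p)).filter fun q =>
        q.1.val < q.2.val ∧ fml a t p q.1.val = fml a t p q.2.val).card = a.choose 2 + t := by
      rw [transfer2 p (fun x y => x < y ∧ fml a t p x = fml a t p y),
        eq_pairs_card a t p ha1 hsize]
    have hsplit := Finset.card_filter_add_card_filter_not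
      (s := (univ : Finset (Fin p × Fin p)).filter fun q => q.1.val < q.2.val)
      (p := fun q => fml a t p q.1.val = fml a t p q.2.val)
    rw [filter_filter, filter_filter] at hsplit
    rw [Nat.card_eq_fintype_card, Fintype.card_subtype]
    have hfe : ((univ : Finset (Fin p × Fin p)).filter fun q =>
        q.1 < q.2 ∧ ¬ fml a t p q.1.val = fml a t p q.2.val).card
        = ((univ : Finset (Fin p × Fin p)).filter fun q =>
        q.1.val < q.2.val ∧ ¬ fml a t p q.1.val = fml a t p q.2.val).card := by
      congr 1
    rw [hfe]
    omega
  · -- singleton class of 0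
    intro x y hx
    constructor
    · intro h
      have hy : y.val = 0 := by
        change fml a t p x.val = fml a t p y.val at h
        rw [hx] at h
        simp only [fml] at h
        split_ifs at h <;> omega
      exact Fin.ext (by rw [hx, hy])
    · rintro rfl; rfl
  · -- class sizes
    intro x
    show Nat.card {y : Fin p // fml a t p x.val = fml a t p y.val} ≤ (p + 1) / 2
    rw [Nat.card_eq_fintype_card, Fintype.card_subtype]
    calc ((univ : Finset (Fin p)).filter fun y => fml a t p x.val = fml a t p y.val).card
        = ((range p).filter fun y => fml a t p x.val = fml a t p y).card :=
          transfer1 p (fun y => fml a t p x.val = fml a t p y)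
      _ ≤ (p + 1) / 2 := class_bound a t p x.val ha1 hsize x.isLt h2a h3
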